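/- Let E be a module with a bilinear bracket [·,·] and let I, J : E → E be anti-commuting linear maps (I∘J = -J∘I). Define the concomitant C(I,J)(X,Y) = [X,Y]_{I,J} + [X,Y]_{J,I} (sum of the two successive deformations in either order). Then for all n ≥ 1: C(I, I^n∘J)(X,Y) = I(C(I, I^{n-1}∘J)(X,Y)) + 2·T(I)((I^{n-1}∘J)X, Y) + 2·T(I)(X, (I^{n-1}∘J)Y). -/

import Mathlib

variable {R : Type*} [CommRing R] {E : Type*} [AddCommGroup E] [Module R E]

/-- The underlying binary operation of a bilinear bracket. -/
def br2 (b : E →ₗ[R] E →ₗ[R] E) : E → E → E := fun x y => b x y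

/-- Deformation of a bracket `b` by an endomorphism `I`:
`[X,Y]_I = [IX,Y] + [X,IY] - I [X,Y]`. -/
def deform (I : Module.End R E) (b : E → E → E) : E → E → E :=
  fun X Y => b (I X) Y + b X (I Y) - I (b X Y)

/-- Nijenhuis torsion of `I` with respect to the bracket `b`. -/
def torsion (I : Module.End R E) (b : E → E → E) : E → E → E :=
  fun X Y => b (I X) (I Y) - I (deform I b X Y)


/-- Concomitant `C(I,J)(X,Y) = [X,Y]_{I,J} + [X,Y]_{J,I}`. -/
def conc (I J : Module.End R E) (b : E → E → E) : E → E → E :=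
  fun X Y => deform J (deform I b) X Y + deform I (deform J b) X Y

lemma key (b : E →ₗ[R] E →ₗ[R] E) (I K : Module.End R E)
    (h : ∀ x, I (K x) = -(K (I x))) (X Y : E) :
    conc I (I * K) (br2 b) X Y
      = I (conc I K (br2 b) X Y)
        + (2 : ℕ) • torsion I (br2 b) (K X) Y
        + (2 : ℕ) • torsion I (br2 b) X (K Y) := by
  simp only [conc, deform, torsion, br2, Module.End.mul_apply, h, map_add, map_sub, map_neg,
    LinearMap.map_neg₂, LinearMap.neg_apply, neg_neg, two_smul]
  abel

theorem stmt5 (b : E →ₗ[R] E →ₗ[R] E) (I J : Module.End R E)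
    (hanti : I * J = -(J * I)) (n : ℕ) (hn : 1 ≤ n) (X Y : E) :
    conc I (I ^ n * J) (br2 b) X Y
      = I (conc I (I ^ (n - 1) * J) (br2 b) X Y)
        + (2 : ℕ) • torsion I (br2 b) ((I ^ (n - 1) * J) X) Y
        + (2 : ℕ) • torsion I (br2 b) X ((I ^ (n - 1) * J) Y) := by
  obtain ⟨m, rfl⟩ := Nat.exists_eq_add_of_le hn
  set K := I ^ m * J with hK
  have hpow : I ^ (1 + m) * J = I * K := by
    rw [hK, pow_add, pow_one, mul_assoc]
  have hcomm : I * K = -(K * I) := by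
    calc I * K = I ^ m * (I * J) := by
          rw [hK, ← mul_assoc, ← pow_succ', pow_succ, mul_assoc]
      _ = -(K * I) := by rw [hanti, mul_neg, hK, mul_assoc]
  have h : ∀ x, I (K x) = -(K (I x)) := by
    intro x
    have := congrArg (fun f : Module.End R E => f x) hcomm
    simpa using this
  simp only [Nat.add_sub_cancel_left, hpow, ← hK]
  exact key b I K h X Y
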